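/- There is no convex quadrilateral ABCD (vertices in cyclic order) with interior angles γ, γ, γ, β in cyclic order, γ ≠ π/2, γ ≠ β, that determines at most three distinct angle values in (0,π) among its four vertices. -/

import Mathlib

open EuclideanGeometry

noncomputable section

abbrev Pt : Type := EuclideanSpace ℝ (Fin 2)

/-- The point (x, y) in the Euclidean plane. -/
def pt (x y : ℝ) : Pt := (WithLp.equiv 2 (Fin 2 → ℝ)).symm ![x, y]

/-- The set of distinct angle values in (0, π) determined by a planar point set. -/
def angleSet (P : Set Pt) : Set ℝ :=
  {θ : ℝ | θ ∈ Set.Ioo 0 Real.pi ∧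
    ∃ x ∈ P, ∃ y ∈ P, ∃ z ∈ P, x ≠ y ∧ y ≠ z ∧ x ≠ z ∧ ∠ x y z = θ}


/-- A convex quadrilateral with vertices in cyclic order: the open diagonals meet and
no three consecutive vertices are collinear. -/
def ConvexQuad (A B C D : Pt) : Prop :=
  (∃ x, x ∈ openSegment ℝ A C ∧ x ∈ openSegment ℝ B D) ∧
  ¬ Collinear ℝ ({A, B, C} : Set Pt) ∧ ¬ Collinear ℝ ({B, C, D} : Set Pt) ∧
  ¬ Collinear ℝ ({C, D, A} : Set Pt) ∧ ¬ Collinear ℝ ({D, A, B} : Set Pt)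

/- ### Auxiliary lemmas -/

lemma ne₁₂' {x y z : Pt} (h : ¬Collinear ℝ ({x, y, z} : Set Pt)) : x ≠ y := by
  rintro rfl
  exact h (Collinear.subset (by intro p hp; simp at hp ⊢; tauto) (collinear_pair ℝ x z))

lemma ne₂₃' {x y z : Pt} (h : ¬Collinear ℝ ({x, y, z} : Set Pt)) : y ≠ z := by
  rintro rfl
  exact h (Collinear.subset (by intro p hp; simp at hp ⊢; tauto) (collinear_pair ℝ x y))

lemma ne₁₃' {x y z : Pt} (h : ¬Collinear ℝ ({x, y, z} : Set Pt)) : x ≠ z := by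
  rintro rfl
  exact h (Collinear.subset (by intro p hp; simp at hp ⊢; tauto) (collinear_pair ℝ x y))

lemma ncol_perm' {x y z : Pt} (h : ¬Collinear ℝ ({x, y, z} : Set Pt)) (x' y' z' : Pt)
    (hs : ({x, y, z} : Set Pt) ⊆ ({x', y', z'} : Set Pt)) :
    ¬Collinear ℝ ({x', y', z'} : Set Pt) := fun hc => h (Collinear.subset hs hc)

lemma openSegment_vsub' {P Q E : Pt} (h : E ∈ openSegment ℝ P Q) :
    ∃ b : ℝ, 0 < b ∧ E -ᵥ P = b • (Q -ᵥ P) := by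
  obtain ⟨a, b, ha, hb, hab, hE⟩ := h
  refine ⟨b, hb, ?_⟩
  have ha' : a = 1 - b := by linarith
  subst ha'
  rw [← hE, vsub_eq_sub, vsub_eq_sub]
  module

/-- Angles are unchanged when a point is replaced by another point on the same open ray. -/
lemma angle_ray' {X P Q E : Pt} (h : E ∈ openSegment ℝ P Q) : ∠ X P E = ∠ X P Q := by
  obtain ⟨b, hb, hvec⟩ := openSegment_vsub' h
  unfold EuclideanGeometry.angle
  rw [hvec]
  exact InnerProductGeometry.angle_smul_right_of_pos _ _ hb

/-- Angle additivity for a cevian through a point on the opposite open segment. -/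
lemma angle_split' {P Q R E : Pt} (hE : E ∈ openSegment ℝ Q R)
    (hcol : ¬Collinear ℝ ({P, Q, R} : Set Pt)) : ∠ Q P E + ∠ E P R = ∠ Q P R := by
  have hPQ : P ≠ Q := ne₁₂' hcol
  have hPR : P ≠ R := ne₁₃' hcol
  have hQR : Q ≠ R := ne₂₃' hcol
  have hE' : E ∈ openSegment ℝ R Q := by rw [openSegment_symm]; exact hE
  obtain ⟨b, hb, hvec⟩ := openSegment_vsub' hE
  obtain ⟨b', hb', hvec'⟩ := openSegment_vsub' hE'
  have hEQ : E ≠ Q := by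
    rintro rfl
    rw [vsub_self] at hvec
    have := (smul_eq_zero.1 hvec.symm).resolve_left (ne_of_gt hb)
    exact hQR (vsub_eq_zero_iff_eq.1 this).symm
  have hER : E ≠ R := by
    rintro rfl
    rw [vsub_self] at hvec'
    have := (smul_eq_zero.1 hvec'.symm).resolve_left (ne_of_gt hb')
    exact hQR (vsub_eq_zero_iff_eq.1 this)
  have hsb : Sbtw ℝ Q E R :=
    ⟨mem_segment_iff_wbtw.1 (openSegment_subset_segment ℝ Q R hE), hEQ, hER⟩
  have t1 := EuclideanGeometry.angle_add_angle_add_angle_eq_pi (p₁ := Q) P hEQ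
  have t2 := EuclideanGeometry.angle_add_angle_add_angle_eq_pi (p₁ := R) P hER
  have t3 := EuclideanGeometry.angle_add_angle_add_angle_eq_pi (p₁ := Q) P hQR.symm
  have cev := EuclideanGeometry.angle_add_angle_eq_pi_of_angle_eq_pi P hsb.angle₁₂₃_eq_pi
  have ray1 : ∠ P Q E = ∠ P Q R := angle_ray' hE
  have ray2 : ∠ P R E = ∠ P R Q := angle_ray' hE'
  have c1 := EuclideanGeometry.angle_comm Q E P
  have c2 := EuclideanGeometry.angle_comm R E P
  have c3 := EuclideanGeometry.angle_comm Q R P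
  have c4 := EuclideanGeometry.angle_comm R P Q
  have c5 := EuclideanGeometry.angle_comm E P Q
  linarith

/-- Pigeonhole: a finite set of at most 3 reals containing two distinct given elements
has all elements among those two and a third. -/
lemma exists_three' {S : Set ℝ} (hfin : S.Finite) (hcard : S.ncard ≤ 3) {g b : ℝ}
    (hg : g ∈ S) (hb : b ∈ S) (hne : g ≠ b) :
    ∃ t, ∀ x ∈ S, x = g ∨ x = b ∨ x = t := by
  by_cases h : ∃ t ∈ S, t ≠ g ∧ t ≠ b
  · obtain ⟨t, htS, htg, htb⟩ := h
    refine ⟨t, fun x hx => ?_⟩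
    by_contra hc
    push_neg at hc
    obtain ⟨hxg, hxb, hxt⟩ := hc
    have hsub : ({g, b, t, x} : Set ℝ) ⊆ S := by
      intro p hp
      simp only [Set.mem_insert_iff, Set.mem_singleton_iff] at hp
      rcases hp with rfl | rfl | rfl | rfl <;> assumption
    have h4 : ({g, b, t, x} : Set ℝ).ncard = 4 := by
      rw [Set.ncard_insert_of_notMem (by
            simp only [Set.mem_insert_iff, Set.mem_singleton_iff]
            push_neg
            exact ⟨hne, htg.symm, hxg.symm⟩) (Set.toFinite _),
          Set.ncard_insert_of_notMem (by
            simp only [Set.mem_insert_iff, Set.mem_singleton_iff]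
            push_neg
            exact ⟨htb.symm, hxb.symm⟩) (Set.toFinite _),
          Set.ncard_insert_of_notMem (by simpa using hxt.symm) (Set.toFinite _),
          Set.ncard_singleton]
    have hle := Set.ncard_le_ncard hsub hfin
    omega
  · push_neg at h
    refine ⟨g, fun x hx => ?_⟩
    by_cases hxg : x = g
    · exact Or.inl hxg
    · exact Or.inr (Or.inl (h x hx hxg))

set_option maxHeartbeats 10000000 in
theorem stmt7 : ¬ ∃ (A B C D : Pt) (γ β : ℝ), ConvexQuad A B C D ∧
    ∠ D A B = γ ∧ ∠ A B C = γ ∧ ∠ B C D = γ ∧ ∠ C D A = β ∧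
    γ ≠ Real.pi / 2 ∧ γ ≠ β ∧ (angleSet {A, B, C, D}).ncard ≤ 3 := by
  rintro ⟨A, B, C, D, γ, β, ⟨⟨E, hEAC, hEBD⟩, nABC, nBCD, nCDA, nDAB⟩,
    hγ1, hγ2, hγ3, hβ, hγhalf, hγβ, hcard⟩
  have hECA : E ∈ openSegment ℝ C A := by rw [openSegment_symm]; exact hEAC
  have hEDB : E ∈ openSegment ℝ D B := by rw [openSegment_symm]; exact hEBD
  -- distinctness of vertices
  have hAB : A ≠ B := ne₁₂' nABC
  have hBC : B ≠ C := ne₂₃' nABC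
  have hAC : A ≠ C := ne₁₃' nABC
  have hCD : C ≠ D := ne₁₂' nCDA
  have hBD : B ≠ D := ne₁₃' nBCD
  have hDA : D ≠ A := ne₁₂' nDAB
  -- permuted noncollinearity
  have nBAC := ncol_perm' nABC B A C (by intro p hp; simp at hp ⊢; tauto)
  have nCAD := ncol_perm' nCDA C A D (by intro p hp; simp at hp ⊢; tauto)
  have nABD := ncol_perm' nDAB A B D (by intro p hp; simp at hp ⊢; tauto)
  have nDBC := ncol_perm' nBCD D B C (by intro p hp; simp at hp ⊢; tauto)
  have nBCA := ncol_perm' nABC B C A (by intro p hp; simp at hp ⊢; tauto)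
  have nACD := ncol_perm' nCDA A C D (by intro p hp; simp at hp ⊢; tauto)
  have nCDB := ncol_perm' nBCD C D B (by intro p hp; simp at hp ⊢; tauto)
  have nBDA := ncol_perm' nDAB B D A (by intro p hp; simp at hp ⊢; tauto)
  have nCBD := ncol_perm' nBCD C B D (by intro p hp; simp at hp ⊢; tauto)
  have nDCA := ncol_perm' nCDA D C A (by intro p hp; simp at hp ⊢; tauto)
  -- the four corner splits by the diagonals
  have sA : ∠ B A C + ∠ C A D = γ := by
    have h := angle_split' (P := A) hEBD nABD
    rw [angle_ray' hEAC, angle_comm E A D, angle_ray' hEAC, angle_comm D A C,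
      angle_comm B A D, hγ1] at h
    exact h
  have sB : ∠ A B D + ∠ D B C = γ := by
    have h := angle_split' (P := B) hEAC nBAC
    rw [angle_ray' hEBD, angle_comm E B C, angle_ray' hEBD, angle_comm C B D, hγ2] at h
    exact h
  have sC : ∠ B C A + ∠ A C D = γ := by
    have h := angle_split' (P := C) hEBD nCBD
    rw [angle_ray' hECA, angle_comm E C D, angle_ray' hECA, angle_comm D C A, hγ3] at h
    exact h
  have sD : ∠ C D B + ∠ B D A = β := by
    have h := angle_split' (P := D) hECA nDCA
    rw [angle_ray' hEDB, angle_comm E D A, angle_ray' hEDB, angle_comm A D B, hβ] at h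
    exact h
  -- triangle angle sums
  have tABC : ∠ B A C + γ + ∠ B C A = Real.pi := by
    have h := EuclideanGeometry.angle_add_angle_add_angle_eq_pi (p₁ := A) C hAB.symm
    rw [angle_comm C A B, hγ2] at h
    linarith
  have tACD : ∠ C A D + ∠ A C D + β = Real.pi := by
    have h := EuclideanGeometry.angle_add_angle_add_angle_eq_pi (p₁ := A) D hAC.symm
    rw [angle_comm D A C, hβ] at h
    linarith
  have tABD : γ + ∠ A B D + ∠ B D A = Real.pi := by
    have h := EuclideanGeometry.angle_add_angle_add_angle_eq_pi (p₁ := A) D hAB.symm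
    rw [hγ1] at h
    linarith
  have tBCD : ∠ D B C + γ + ∠ C D B = Real.pi := by
    have h := EuclideanGeometry.angle_add_angle_add_angle_eq_pi (p₁ := B) D hBC.symm
    rw [hγ3] at h
    linarith
  -- positivity and upper bounds
  have pγ : 0 < γ := hγ1 ▸ angle_pos_of_not_collinear nDAB
  have pγ' : γ < Real.pi := hγ1 ▸ angle_lt_pi_of_not_collinear nDAB
  have pβ : 0 < β := hβ ▸ angle_pos_of_not_collinear nCDA
  have pβ' : β < Real.pi := hβ ▸ angle_lt_pi_of_not_collinear nCDA
  have pa1 : 0 < ∠ B A C := angle_pos_of_not_collinear nBAC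
  have pa2 : 0 < ∠ C A D := angle_pos_of_not_collinear nCAD
  have pb1 : 0 < ∠ A B D := angle_pos_of_not_collinear nABD
  have pb2 : 0 < ∠ D B C := angle_pos_of_not_collinear nDBC
  have pc1 : 0 < ∠ B C A := angle_pos_of_not_collinear nBCA
  have pc2 : 0 < ∠ A C D := angle_pos_of_not_collinear nACD
  have pd1 : 0 < ∠ C D B := angle_pos_of_not_collinear nCDB
  have pd2 : 0 < ∠ B D A := angle_pos_of_not_collinear nBDA
  have qa1 : ∠ B A C < Real.pi := angle_lt_pi_of_not_collinear nBAC
  have qa2 : ∠ C A D < Real.pi := angle_lt_pi_of_not_collinear nCAD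
  have qb1 : ∠ A B D < Real.pi := angle_lt_pi_of_not_collinear nABD
  have qb2 : ∠ D B C < Real.pi := angle_lt_pi_of_not_collinear nDBC
  have qc1 : ∠ B C A < Real.pi := angle_lt_pi_of_not_collinear nBCA
  have qc2 : ∠ A C D < Real.pi := angle_lt_pi_of_not_collinear nACD
  have qd1 : ∠ C D B < Real.pi := angle_lt_pi_of_not_collinear nCDB
  have qd2 : ∠ B D A < Real.pi := angle_lt_pi_of_not_collinear nBDA
  have hπ : (0 : ℝ) < Real.pi := Real.pi_pos
  -- the angle set is finite
  have hfin : (angleSet ({A, B, C, D} : Set Pt)).Finite := by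
    have h1 : ((({A, B, C, D} : Set Pt)) ×ˢ ((({A, B, C, D} : Set Pt)) ×ˢ
        (({A, B, C, D} : Set Pt)))).Finite := Set.toFinite _
    apply Set.Finite.subset (h1.image (fun p : Pt × Pt × Pt => ∠ p.1 p.2.1 p.2.2))
    rintro θ ⟨-, x, hx, y, hy, z, hz, -, -, -, rfl⟩
    exact ⟨(x, y, z), ⟨hx, hy, hz⟩, rfl⟩
  -- membership of all the relevant angles
  have memS : ∀ (x y z : Pt), x ∈ ({A, B, C, D} : Set Pt) → y ∈ ({A, B, C, D} : Set Pt) →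
      z ∈ ({A, B, C, D} : Set Pt) → ¬Collinear ℝ ({x, y, z} : Set Pt) →
      ∠ x y z ∈ angleSet ({A, B, C, D} : Set Pt) := fun x y z hx hy hz hnc =>
    ⟨⟨angle_pos_of_not_collinear hnc, angle_lt_pi_of_not_collinear hnc⟩,
      x, hx, y, hy, z, hz, ne₁₂' hnc, ne₂₃' hnc, ne₁₃' hnc, rfl⟩
  have hγS : γ ∈ angleSet ({A, B, C, D} : Set Pt) := by
    rw [← hγ1]; exact memS D A B (by simp) (by simp) (by simp) nDAB
  have hβS : β ∈ angleSet ({A, B, C, D} : Set Pt) := by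
    rw [← hβ]; exact memS C D A (by simp) (by simp) (by simp) nCDA
  obtain ⟨θ, hθ⟩ := exists_three' hfin hcard hγS hβS hγβ
  have Ha1 := hθ _ (memS B A C (by simp) (by simp) (by simp) nBAC)
  have Ha2 := hθ _ (memS C A D (by simp) (by simp) (by simp) nCAD)
  have Hb1 := hθ _ (memS A B D (by simp) (by simp) (by simp) nABD)
  have Hb2 := hθ _ (memS D B C (by simp) (by simp) (by simp) nDBC)
  have Hc1 := hθ _ (memS B C A (by simp) (by simp) (by simp) nBCA)
  have Hc2 := hθ _ (memS A C D (by simp) (by simp) (by simp) nACD)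
  have Hd1 := hθ _ (memS C D B (by simp) (by simp) (by simp) nCDB)
  have Hd2 := hθ _ (memS B D A (by simp) (by simp) (by simp) nBDA)
  -- prune impossible values
  have Ka1 : ∠ B A C = β ∨ ∠ B A C = θ := by
    rcases Ha1 with h | h | h
    · exfalso; linarith
    · exact Or.inl h
    · exact Or.inr h
  have Ka2 : ∠ C A D = β ∨ ∠ C A D = θ := by
    rcases Ha2 with h | h | h
    · exfalso; linarith
    · exact Or.inl h
    · exact Or.inr h
  have Kb1 : ∠ A B D = β ∨ ∠ A B D = θ := by
    rcases Hb1 with h | h | h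
    · exfalso; linarith
    · exact Or.inl h
    · exact Or.inr h
  have Kb2 : ∠ D B C = β ∨ ∠ D B C = θ := by
    rcases Hb2 with h | h | h
    · exfalso; linarith
    · exact Or.inl h
    · exact Or.inr h
  have Kc1 : ∠ B C A = β ∨ ∠ B C A = θ := by
    rcases Hc1 with h | h | h
    · exfalso; linarith
    · exact Or.inl h
    · exact Or.inr h
  have Kc2 : ∠ A C D = β ∨ ∠ A C D = θ := by
    rcases Hc2 with h | h | h
    · exfalso; linarith
    · exact Or.inl h
    · exact Or.inr h
  have Kd1 : ∠ C D B = γ ∨ ∠ C D B = θ := by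
    rcases Hd1 with h | h | h
    · exact Or.inl h
    · exfalso; linarith
    · exact Or.inr h
  have Kd2 : ∠ B D A = γ ∨ ∠ B D A = θ := by
    rcases Hd2 with h | h | h
    · exact Or.inl h
    · exfalso; linarith
    · exact Or.inr h
  clear Ha1 Ha2 Hb1 Hb2 Hc1 Hc2 Hd1 Hd2 hθ hcard hfin memS hγS hβS
  clear hEAC hEBD hECA hEDB hγ1 hγ2 hγ3 hβ
  rcases lt_or_gt_of_ne hγhalf with hs1 | hs1 <;>
    rcases lt_or_gt_of_ne hγβ with hs2 | hs2 <;>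
    rcases Ka1 with h1 | h1 <;> rcases Ka2 with h2 | h2 <;>
    rcases Kb1 with h3 | h3 <;> rcases Kb2 with h4 | h4 <;>
    rcases Kc1 with h5 | h5 <;> rcases Kc2 with h6 | h6 <;>
    rcases Kd1 with h7 | h7 <;> rcases Kd2 with h8 | h8 <;>
    linarith
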